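/- Let R₀ > 0 and K ≥ 2. If coefficients satisfy A_n ≤ 2^{-R₀ n} for all n = 1,…,K−1 with a_n given by Lemma 1's allocation, then the channel-gain threshold for every decoding event B_n and B_{n→m} (m < n ≤ K) equals (2^{K R₀} − 1)/ξ; i.e., for all g > 0 and all m ≤ n, log₂(1 + a_m ξ g/(1 + A_m ξ g)) > R₀ ⟺ ξ g > 2^{K R₀} − 1. -/

import Mathlib

open Finset Real

private lemma helper_arith (r s D x y : ℝ) (hr : 1 < r) (hs : 1 ≤ s) (hD : 0 < D)
    (hu : 0 < x * y) :
    r < 1 + s * (r - 1) / D * x * y / (1 + (s - 1) / D * x * y) ↔ D < x * y := by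
  have hd : (0:ℝ) < 1 + (s - 1) / D * x * y := by
    have h1 : 0 ≤ (s - 1) / D := div_nonneg (by linarith) hD.le
    nlinarith
  rw [← sub_lt_iff_lt_add', lt_div_iff₀ hd]
  have main : (r - 1) * (1 + (s - 1) / D * x * y) < s * (r - 1) / D * x * y ↔
      (r - 1) * (D + (s - 1) * (x * y)) < s * (r - 1) * (x * y) := by
    rw [show (r - 1) * (1 + (s - 1) / D * x * y) = (r - 1) * (D + (s - 1) * (x * y)) / D by
        field_simp,
      show s * (r - 1) / D * x * y = s * (r - 1) * (x * y) / D by ring,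
      div_lt_div_iff_of_pos_right hD]
  rw [main]
  constructor
  · intro h
    nlinarith [sub_pos.mpr hr, mul_pos (sub_pos.mpr hr) hu]
  · intro h
    nlinarith [mul_pos (sub_pos.mpr hr) (sub_pos.mpr h)]

/-- Under the equal-outage allocation, every decoding event `B_n` and `B_{n→m}` (`m ≤ n ≤ K`)
reduces to the same channel-gain threshold: for all `g > 0`,
`log₂(1 + a_m ξ g/(1 + A_m ξ g)) > R₀ ↔ ξ g > 2^(K R₀) - 1`. -/
theorem common_decoding_threshold (R₀ : ℝ) (hR : 0 < R₀) (K : ℕ) (hK : 2 ≤ K)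
    (ξ : ℝ) (hξ : 0 < ξ)
    (a A : ℕ → ℝ)
    (ha : ∀ n, a n = (2 : ℝ) ^ (((K : ℝ) - n) * R₀) * ((2 : ℝ) ^ R₀ - 1) /
      ((2 : ℝ) ^ ((K : ℝ) * R₀) - 1))
    (hA : ∀ n, A n = ∑ l ∈ Finset.Icc (n + 1) K, a l)
    (hlim : ∀ n, 1 ≤ n → n ≤ K - 1 → A n ≤ (2 : ℝ) ^ (-R₀ * (n : ℝ))) :
    ∀ g : ℝ, 0 < g → ∀ m n : ℕ, 1 ≤ m → m ≤ n → n ≤ K →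
      (Real.logb 2 (1 + a m * ξ * g / (1 + A m * ξ * g)) > R₀ ↔
        ξ * g > (2 : ℝ) ^ ((K : ℝ) * R₀) - 1) := by
  intro g hg m n hm hmn hnK
  have hmK : m ≤ K := hmn.trans hnK
  have hr1 : (1:ℝ) < (2:ℝ) ^ R₀ := by
    rw [show (1:ℝ) = (2:ℝ) ^ (0:ℝ) by simp]
    exact Real.rpow_lt_rpow_left_iff one_lt_two |>.mpr hR
  have hKpos : (0:ℝ) < (K:ℝ) := by exact_mod_cast (by omega : 0 < K)
  have hD : (0:ℝ) < (2:ℝ) ^ ((K:ℝ) * R₀) - 1 := by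
    have : (1:ℝ) < (2:ℝ) ^ ((K:ℝ) * R₀) := by
      rw [show (1:ℝ) = (2:ℝ) ^ (0:ℝ) by simp]
      exact Real.rpow_lt_rpow_left_iff one_lt_two |>.mpr (by positivity)
    linarith
  have hterm : ∀ l : ℕ, l ≤ K → (2:ℝ) ^ (((K:ℝ) - l) * R₀) = ((2:ℝ) ^ R₀) ^ (K - l) := by
    intro l hl
    have hc : ((K:ℝ) - l) = ((K - l : ℕ) : ℝ) := by
      rw [Nat.cast_sub hl]
    rw [hc, mul_comm, Real.rpow_mul (by norm_num : (0:ℝ) ≤ 2), Real.rpow_natCast]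
  have ham : a m = ((2:ℝ) ^ R₀) ^ (K - m) * ((2:ℝ) ^ R₀ - 1) / ((2:ℝ) ^ ((K:ℝ) * R₀) - 1) := by
    rw [ha m, hterm m hmK]
  have hsum : ∑ l ∈ Finset.Icc (m + 1) K, ((2:ℝ) ^ R₀) ^ (K - l)
      = ∑ j ∈ Finset.range (K - m), ((2:ℝ) ^ R₀) ^ j := by
    rw [← Finset.Ico_add_one_right_eq_Icc, Finset.sum_Ico_eq_sum_range]
    have hn : K + 1 - (m + 1) = K - m := by omega
    rw [hn]
    rw [← Finset.sum_range_reflect (fun j => ((2:ℝ) ^ R₀) ^ j) (K - m)]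
    apply Finset.sum_congr rfl
    intro i hi
    have : K - (m + 1 + i) = K - m - 1 - i := by omega
    rw [this]
  have hAm : A m = (((2:ℝ) ^ R₀) ^ (K - m) - 1) / ((2:ℝ) ^ ((K:ℝ) * R₀) - 1) := by
    rw [hA m]
    have hc : ∀ l ∈ Finset.Icc (m + 1) K, a l
        = ((2:ℝ) ^ R₀) ^ (K - l) * (((2:ℝ) ^ R₀ - 1) / ((2:ℝ) ^ ((K:ℝ) * R₀) - 1)) := by
      intro l hl
      obtain ⟨_, h2⟩ := Finset.mem_Icc.mp hl
      rw [ha l, hterm l h2, mul_div_assoc]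
    rw [Finset.sum_congr rfl hc, ← Finset.sum_mul, hsum,
      geom_sum_eq hr1.ne' (K - m)]
    field_simp [sub_ne_zero.mpr hr1.ne']
  have hs1 : (1:ℝ) ≤ ((2:ℝ) ^ R₀) ^ (K - m) := one_le_pow₀ hr1.le
  have huxy : 0 < ξ * g := mul_pos hξ hg
  have hd : (0:ℝ) < 1 + A m * ξ * g := by
    rw [hAm]
    have h1 : 0 ≤ (((2:ℝ) ^ R₀) ^ (K - m) - 1) / ((2:ℝ) ^ ((K:ℝ) * R₀) - 1) :=
      div_nonneg (by linarith) hD.le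
    nlinarith
  have hx : (0:ℝ) < 1 + a m * ξ * g / (1 + A m * ξ * g) := by
    have hnum : 0 ≤ a m * ξ * g := by
      rw [ham]
      have h2 : 0 ≤ ((2:ℝ) ^ R₀) ^ (K - m) * ((2:ℝ) ^ R₀ - 1) / ((2:ℝ) ^ ((K:ℝ) * R₀) - 1) :=
        div_nonneg (by nlinarith) hD.le
      positivity
    have := div_nonneg hnum hd.le
    linarith
  rw [gt_iff_lt, Real.lt_logb_iff_rpow_lt one_lt_two hx, ham, hAm, gt_iff_lt]
  exact helper_arith ((2:ℝ) ^ R₀) (((2:ℝ) ^ R₀) ^ (K - m)) ((2:ℝ) ^ ((K:ℝ) * R₀) - 1) ξ g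
    hr1 hs1 hD huxy
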